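/- Suppose v : ℤ → ℂ^k represents a point of the skew shaped positroid S°_{λ/μ}, the box (a,i) belongs to μ (i.e. i ≤ μ̄_a), the box (a−1,i) belongs to λ/μ, and the box (a−1,i+1) belongs to λ/μ (i.e. i+1 ≤ λ̄_{a−1}), where 2 ≤ a ≤ n−k. Then W^op_i ⊆ V(a−1,i+1) and W^op_i ≠ V(a−1,i). -/

import Mathlib

/-- The height `λ̄_a` of the `a`-th column (counted from the right) of the
partition `f = (f 1 ≥ ⋯ ≥ f k)` inside the `k × (n-k)` rectangle. -/
def colHeight (n k : ℕ) (f : ℕ → ℕ) (a : ℕ) : ℕ :=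
  ((Finset.Icc 1 k).filter (fun i => n - k - a + 1 ≤ f i)).card

/-- `b_i = n - k - μ_i + i`. -/
def bvec (n k : ℕ) (m : ℕ → ℕ) (i : ℕ) : ℕ := n - k - m i + i

/-- The short label `J(a,i) = {min (a+j-1) (b_j) : j = 1, …, i}`. -/
def shortLabel (n k : ℕ) (m : ℕ → ℕ) (a i : ℕ) : Finset ℕ :=
  (Finset.Icc 1 i).image (fun j => min (a + j - 1) (bvec n k m j))

/-- The label `I'(a,i) = J(a,i) ∪ {b_{i+1}, …, b_k}`. -/
def fullLabel (n k : ℕ) (m : ℕ → ℕ) (a i : ℕ) : Finset ℕ :=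
  shortLabel n k m a i ∪ (Finset.Icc (i + 1) k).image (bvec n k m)

/-- `I_μ = {b_1, …, b_k}`. -/
def Imu (n k : ℕ) (m : ℕ → ℕ) : Finset ℕ := (Finset.Icc 1 k).image (bvec n k m)

/-- The box `(a,i)` belongs to the skew diagram `λ/μ`. -/
def InSkew (n k : ℕ) (l m : ℕ → ℕ) (a i : ℕ) : Prop :=
  1 ≤ a ∧ a ≤ n - k ∧ 1 ≤ i ∧ i ≤ k ∧ colHeight n k m a < i ∧ i ≤ colHeight n k l a

/-- The box `(a,i)` belongs to the boundary ribbon `R(λ/μ)`. -/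
def InRibbon (n k : ℕ) (l m : ℕ → ℕ) (a i : ℕ) : Prop :=
  InSkew n k l m a i ∧ (a = 1 ∨ colHeight n k l (a - 1) ≤ i)

/-- `S` is the `r`-th entry of the Grassmann necklace `I_{λ/μ}`. -/
def IsNecklaceEntry (n k : ℕ) (l m : ℕ → ℕ) (r : ℕ) (S : Finset ℕ) : Prop :=
  (∃ a i, InRibbon n k l m a i ∧ r = a + i - 1 ∧ S = fullLabel n k m a i) ∨
  ((¬ ∃ a i, InRibbon n k l m a i ∧ r = a + i - 1) ∧ S = Imu n k m)

/-- The family `{v_j : j ∈ S}` is a basis of `ℂ^k`. -/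
def IsBasisFam (k : ℕ) (v : ℤ → Fin k → ℂ) (S : Finset ℕ) : Prop :=
  LinearIndependent ℂ (fun j : ↥S => v ((j : ℕ) : ℤ)) ∧
  Submodule.span ℂ ((fun j : ℕ => v (j : ℤ)) '' (S : Set ℕ)) = ⊤

/-- `v : ℤ → ℂ^k` represents a point of the skew shaped positroid `S°_{λ/μ}`. -/
def RepsPoint (n k : ℕ) (l m : ℕ → ℕ) (v : ℤ → Fin k → ℂ) : Prop :=
  (∀ j : ℤ, v (j + (n : ℤ)) = ((-1 : ℂ) ^ (k - 1)) • v j) ∧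
  (∀ r ∈ Finset.Icc 1 n, ∀ S : Finset ℕ, IsNecklaceEntry n k l m r S → IsBasisFam k v S) ∧
  (∀ a : ℕ, 1 ≤ a → a ≤ n - k →
    v ((a + colHeight n k m a : ℕ) : ℤ) ∈
      Submodule.span ℂ ((fun j : ℕ => v (j : ℤ)) ''
        ↑(Finset.Icc (a + colHeight n k m a + 1) (a + colHeight n k l a))))

/-- `V(a,i) = span{v_j : j ∈ J(a,i)}`. -/
noncomputable def Vspace (n k : ℕ) (m : ℕ → ℕ) (v : ℤ → Fin k → ℂ) (a i : ℕ) :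
    Submodule ℂ (Fin k → ℂ) :=
  Submodule.span ℂ ((fun j : ℕ => v (j : ℤ)) '' ↑(shortLabel n k m a i))

/-- `W^op_p = span(v_{b_1}, …, v_{b_p})`. -/
noncomputable def Wop (n k : ℕ) (m : ℕ → ℕ) (v : ℤ → Fin k → ℂ) (p : ℕ) :
    Submodule ℂ (Fin k → ℂ) :=
  Submodule.span ℂ ((fun j : ℕ => v (j : ℤ)) '' ↑((Finset.Icc 1 p).image (bvec n k m)))

/-- `W_p = span(v_{b_{k-p+1}}, …, v_{b_k})`. -/
noncomputable def Wsp (n k : ℕ) (m : ℕ → ℕ) (v : ℤ → Fin k → ℂ) (p : ℕ) :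
    Submodule ℂ (Fin k → ℂ) :=
  Submodule.span ℂ ((fun j : ℕ => v (j : ℤ)) '' ↑((Finset.Icc (k - p + 1) k).image (bvec n k m)))


section Stmt14Aux

lemma colHeight_le_k (n k : ℕ) (f : ℕ → ℕ) (a : ℕ) : colHeight n k f a ≤ k := by
  unfold colHeight
  calc ((Finset.Icc 1 k).filter (fun i => n - k - a + 1 ≤ f i)).card
      ≤ (Finset.Icc 1 k).card := Finset.card_filter_le _ _
    _ = k := by rw [Nat.card_Icc]; omega

lemma colHeight_mono_a (n k : ℕ) (f : ℕ → ℕ) {a b : ℕ} (h : a ≤ b) :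
    colHeight n k f a ≤ colHeight n k f b := by
  apply Finset.card_le_card
  intro x hx
  simp only [Finset.mem_filter, Finset.mem_Icc] at hx ⊢
  exact ⟨hx.1, by omega⟩

lemma le_of_le_colHeight (n k : ℕ) (f : ℕ → ℕ)
    (hf : ∀ i j, 1 ≤ i → i ≤ j → j ≤ k → f j ≤ f i)
    {a j : ℕ} (hj1 : 1 ≤ j) (hj : j ≤ colHeight n k f a) :
    j ≤ k ∧ n - k - a + 1 ≤ f j := by
  have hjk : j ≤ k := le_trans hj (colHeight_le_k n k f a)
  refine ⟨hjk, ?_⟩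
  by_contra hcon
  push_neg at hcon
  have hsub : ((Finset.Icc 1 k).filter (fun i => n - k - a + 1 ≤ f i))
      ⊆ Finset.Icc 1 (j - 1) := by
    intro x hx
    simp only [Finset.mem_filter, Finset.mem_Icc] at hx ⊢
    refine ⟨hx.1.1, ?_⟩
    by_contra hx2
    push_neg at hx2
    have := hf j x hj1 (by omega) hx.1.2
    omega
  have hcard := Finset.card_le_card hsub
  rw [Nat.card_Icc] at hcard
  unfold colHeight at hj
  omega

lemma lt_of_colHeight_lt (n k : ℕ) (f : ℕ → ℕ)
    (hf : ∀ i j, 1 ≤ i → i ≤ j → j ≤ k → f j ≤ f i)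
    {a j : ℕ} (hj1 : 1 ≤ j) (hjk : j ≤ k) (hj : colHeight n k f a < j) :
    f j < n - k - a + 1 := by
  by_contra hcon
  push_neg at hcon
  have hsub : Finset.Icc 1 j ⊆
      ((Finset.Icc 1 k).filter (fun i => n - k - a + 1 ≤ f i)) := by
    intro x hx
    simp only [Finset.mem_Icc] at hx
    simp only [Finset.mem_filter, Finset.mem_Icc]
    exact ⟨⟨hx.1, le_trans hx.2 hjk⟩, le_trans hcon (hf x j hx.1 hx.2 hjk)⟩
  have hcard := Finset.card_le_card hsub
  rw [Nat.card_Icc] at hcard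
  unfold colHeight at hj
  omega

lemma bvec_step (n k : ℕ) (m : ℕ → ℕ)
    (hm : ∀ i j, 1 ≤ i → i ≤ j → j ≤ k → m j ≤ m i)
    {j : ℕ} (hj1 : 1 ≤ j) (hjk : j + 1 ≤ k) :
    bvec n k m j + 1 ≤ bvec n k m (j + 1) := by
  have h := hm j (j + 1) hj1 (by omega) hjk
  have h2 : n - k - m j ≤ n - k - m (j + 1) := Nat.sub_le_sub_left h _
  unfold bvec
  omega

lemma shortLabel_step (n k : ℕ) (m : ℕ → ℕ)
    (hm : ∀ i j, 1 ≤ i → i ≤ j → j ≤ k → m j ≤ m i)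
    {a₀ i₀ : ℕ} (ha : 2 ≤ a₀) (hik : i₀ + 1 ≤ k) :
    shortLabel n k m a₀ i₀ ⊆ shortLabel n k m (a₀ - 1) (i₀ + 1) := by
  intro x hx
  simp only [shortLabel, Finset.mem_image, Finset.mem_Icc] at hx ⊢
  obtain ⟨j, ⟨hj1, hj2⟩, rfl⟩ := hx
  by_cases hc : bvec n k m j ≤ a₀ + j - 2
  · exact ⟨j, ⟨hj1, by omega⟩, by omega⟩
  · have hb := bvec_step n k m hm hj1 (by omega)
    exact ⟨j + 1, ⟨by omega, by omega⟩, by omega⟩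

lemma rib_exists (n k : ℕ) (l m : ℕ → ℕ)
    (hm : ∀ i j, 1 ≤ i → i ≤ j → j ≤ k → m j ≤ m i) :
    ∀ a₀ : ℕ, ∀ i₀ : ℕ, 1 ≤ a₀ → a₀ ≤ n - k → 1 ≤ i₀ →
    colHeight n k m a₀ < i₀ → i₀ ≤ colHeight n k l a₀ →
    ∃ a'' i'', InRibbon n k l m a'' i'' ∧ a'' + i'' = a₀ + i₀ ∧
      shortLabel n k m a₀ i₀ ⊆ shortLabel n k m a'' i'' := by
  intro a₀
  induction a₀ using Nat.strong_induction_on with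
  | _ a₀ ih =>
    intro i₀ h1 h2 h3 h4 h5
    by_cases hr : a₀ = 1 ∨ colHeight n k l (a₀ - 1) ≤ i₀
    · exact ⟨a₀, i₀, ⟨⟨h1, h2, h3, le_trans h5 (colHeight_le_k n k l a₀), h4, h5⟩, hr⟩,
        rfl, Finset.Subset.refl _⟩
    · push_neg at hr
      obtain ⟨ha1, hio⟩ := hr
      have ha2 : 2 ≤ a₀ := by omega
      have hik : i₀ + 1 ≤ k := le_trans hio (colHeight_le_k n k l (a₀ - 1))
      have hcm : colHeight n k m (a₀ - 1) < i₀ + 1 :=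
        lt_of_le_of_lt (lt_of_le_of_lt (colHeight_mono_a n k m (by omega : a₀ - 1 ≤ a₀)) h4).le
          (by omega)
      obtain ⟨a'', i'', hR, hsum, hsub⟩ :=
        ih (a₀ - 1) (by omega) (i₀ + 1) (by omega) (by omega) (by omega) hcm hio
      exact ⟨a'', i'', hR, by omega,
        Finset.Subset.trans (shortLabel_step n k m hm ha2 hik) hsub⟩

end Stmt14Aux

set_option maxHeartbeats 1600000 in
theorem stmt14 (n k : ℕ) (l m : ℕ → ℕ)
    (hk : 0 < k) (hkn : k < n)
    (hlmono : ∀ i j, 1 ≤ i → i ≤ j → j ≤ k → l j ≤ l i)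
    (hl1 : l 1 ≤ n - k)
    (hmmono : ∀ i j, 1 ≤ i → i ≤ j → j ≤ k → m j ≤ m i)
    (hml : ∀ i, 1 ≤ i → i ≤ k → m i ≤ l i)
    (v : ℤ → Fin k → ℂ) (hv : RepsPoint n k l m v)
    (a i : ℕ) (ha1 : 2 ≤ a) (ha2 : a ≤ n - k)
    (hmu : i ≤ colHeight n k m a)
    (h1 : InSkew n k l m (a - 1) i) (h2 : InSkew n k l m (a - 1) (i + 1)) :
    Wop n k m v i ≤ Vspace n k m v (a - 1) (i + 1) ∧
    Wop n k m v i ≠ Vspace n k m v (a - 1) i := by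
  classical
  obtain ⟨hA1, hA2, hI1p, hIk, hM2, hL2⟩ := h2
  obtain ⟨-, -, hI1, hik, hM1, hL1⟩ := h1
  have hci : colHeight n k m (a - 1) < i := hM1
  have hbstep : ∀ j, 1 ≤ j → j + 1 ≤ k → bvec n k m j + 1 ≤ bvec n k m (j + 1) :=
    fun j hj1 hjk => bvec_step n k m hmmono hj1 hjk
  -- K1 : for j ≤ c, b_j ≤ a + j - 2
  have K1 : ∀ j, 1 ≤ j → j ≤ colHeight n k m (a - 1) → bvec n k m j + 2 ≤ a + j := by
    intro j hj1 hjc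
    obtain ⟨hjk, hmj⟩ := le_of_le_colHeight n k m hmmono hj1 hjc
    unfold bvec
    omega
  -- K2 : for c < j ≤ i, b_j = a + j - 1
  have K2 : ∀ j, colHeight n k m (a - 1) < j → j ≤ i → bvec n k m j = a + j - 1 := by
    intro j hcj hji
    have hj1 : 1 ≤ j := by omega
    obtain ⟨hjk, hmj2⟩ := le_of_le_colHeight n k m hmmono hj1 (le_trans hji hmu)
    have hmj1 := lt_of_colHeight_lt n k m hmmono hj1 hjk hcj
    unfold bvec
    omega
  -- memberships
  have hbmem : ∀ j, 1 ≤ j → j ≤ i → bvec n k m j ∈ shortLabel n k m (a - 1) (i + 1) := by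
    intro j hj1 hji
    simp only [shortLabel, Finset.mem_image, Finset.mem_Icc]
    by_cases hjc : j ≤ colHeight n k m (a - 1)
    · have := K1 j hj1 hjc
      exact ⟨j, ⟨hj1, by omega⟩, by omega⟩
    · have h2j := K2 j (by omega) hji
      have hb := hbstep j hj1 (by omega)
      exact ⟨j + 1, ⟨by omega, by omega⟩, by omega⟩
  have hacmem : a + colHeight n k m (a - 1) - 1 ∈ shortLabel n k m (a - 1) i := by
    have h2c := K2 (colHeight n k m (a - 1) + 1) (by omega) (by omega)
    simp only [shortLabel, Finset.mem_image, Finset.mem_Icc]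
    exact ⟨colHeight n k m (a - 1) + 1, ⟨by omega, by omega⟩, by omega⟩
  have hsub1 : (Finset.Icc 1 i).image (bvec n k m) ⊆ shortLabel n k m (a - 1) (i + 1) := by
    intro x hx
    simp only [Finset.mem_image, Finset.mem_Icc] at hx
    obtain ⟨j, ⟨hj1, hj2⟩, rfl⟩ := hx
    exact hbmem j hj1 hj2
  have part1 : Wop n k m v i ≤ Vspace n k m v (a - 1) (i + 1) :=
    Submodule.span_mono (Set.image_mono (Finset.coe_subset.mpr hsub1))
  refine ⟨part1, ?_⟩
  -- part 2
  intro hW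
  -- ribbon box on the antidiagonal through (a-1, i+1)
  obtain ⟨a'', i'', hRib, hsum, hchain⟩ :=
    rib_exists n k l m hmmono (a - 1) (i + 1) hA1 hA2 (by omega) hM2 hL2
  obtain ⟨hx1, hx2, hx3, hx4, hx5, hx6⟩ := hRib.1
  have hNE : IsNecklaceEntry n k l m (a'' + i'' - 1) (fullLabel n k m a'' i'') :=
    Or.inl ⟨a'', i'', hRib, rfl, rfl⟩
  have hbasis := hv.2.1 (a'' + i'' - 1) (Finset.mem_Icc.mpr ⟨by omega, by omega⟩) _ hNE
  have hLI := hbasis.1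
  -- the finset S' of i+1 indices
  have hnotA : a + colHeight n k m (a - 1) - 1 ∉ (Finset.Icc 1 i).image (bvec n k m) := by
    simp only [Finset.mem_image, Finset.mem_Icc]
    rintro ⟨j, ⟨hj1, hj2⟩, hbj⟩
    by_cases hjc : j ≤ colHeight n k m (a - 1)
    · have := K1 j hj1 hjc; omega
    · have := K2 j (by omega) hj2; omega
  have hblt : ∀ j1 j2, 1 ≤ j1 → j1 < j2 → j2 ≤ i → bvec n k m j1 < bvec n k m j2 := by
    intro j1 j2 hj1 hj12 hj2
    have hmle := hmmono j1 j2 hj1 (by omega) (by omega)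
    have h2 : n - k - m j1 ≤ n - k - m j2 := Nat.sub_le_sub_left hmle _
    unfold bvec
    omega
  have hinjOn : Set.InjOn (bvec n k m) ↑(Finset.Icc 1 i) := by
    intro x hx y hy hxy
    simp only [Finset.coe_Icc, Set.mem_Icc] at hx hy
    rcases lt_trichotomy x y with h | h | h
    · have := hblt x y hx.1 h hy.2; omega
    · exact h
    · have := hblt y x hy.1 h hx.2; omega
  have hcardA : ((Finset.Icc 1 i).image (bvec n k m)).card = i := by
    rw [Finset.card_image_of_injOn hinjOn, Nat.card_Icc]; omega
  have hSsub : insert (a + colHeight n k m (a - 1) - 1) ((Finset.Icc 1 i).image (bvec n k m))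
      ⊆ fullLabel n k m a'' i'' := by
    intro x hx
    apply Finset.mem_union_left
    apply hchain
    rcases Finset.mem_insert.mp hx with h | h
    · subst h
      exact Finset.image_subset_image (Finset.Icc_subset_Icc_right (by omega)) hacmem
    · exact hsub1 h
  set S' : Finset ℕ :=
    insert (a + colHeight n k m (a - 1) - 1) ((Finset.Icc 1 i).image (bvec n k m)) with hS'
  have hmemW : ∀ x ∈ S', v (x : ℤ) ∈ Wop n k m v i := by
    intro x hx
    rcases Finset.mem_insert.mp hx with h | h
    · subst h
      rw [hW]
      exact Submodule.subset_span ⟨_, Finset.mem_coe.mpr hacmem, rfl⟩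
    · exact Submodule.subset_span ⟨x, Finset.mem_coe.mpr h, rfl⟩
  have hLI' : LinearIndependent ℂ (fun j : ↥S' => v ((j : ℕ) : ℤ)) := by
    have hinj : Function.Injective
        (fun x : ↥S' => (⟨(x : ℕ), hSsub x.2⟩ : ↥(fullLabel n k m a'' i''))) := by
      intro x y hxy
      exact Subtype.ext (Subtype.mk_eq_mk.mp hxy)
    exact hLI.comp _ hinj
  have hWfam : LinearIndependent ℂ
      (fun j : ↥S' => (⟨v ((j : ℕ) : ℤ), hmemW j j.2⟩ : ↥(Wop n k m v i))) := by
    apply LinearIndependent.of_comp (Wop n k m v i).subtype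
    exact hLI'
  have hcard := hWfam.fintype_card_le_finrank
  rw [Fintype.card_coe] at hcard
  have hrk : Module.finrank ℂ ↥(Wop n k m v i) ≤ i := by
    have heq : Wop n k m v i =
        Submodule.span ℂ
          ↑(((Finset.Icc 1 i).image (bvec n k m)).image (fun j : ℕ => v (j : ℤ))) := by
      rw [Finset.coe_image]
      rfl
    rw [heq]
    exact le_trans (finrank_span_finset_le_card _) (le_trans Finset.card_image_le (by rw [hcardA]))
  have hScard : S'.card = i + 1 := by
    rw [hS', Finset.card_insert_of_notMem hnotA, hcardA]
  omega
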